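/- For 0 < q < 1, for all i, j ∈ ℕ and all n ∈ ℤ, the operator e_{ij} ⊗ S^n (the bounded operator on ℓ²(ℕ × ℤ, ℂ) sending ξ_{m,k} to δ_{j,m} ξ_{i,k+n}) belongs to the double centralizer (bicommutant) of the set {a, a*, b, b*} inside the ring of bounded operators on ℓ²(ℕ × ℤ, ℂ), where a and b are the operators determined by a ξ_{n,k} = √(1 − q^{2n}) ξ_{n−1,k} and b ξ_{n,k} = q^n ξ_{n,k+1}. -/

import Mathlib

noncomputable section

/-- The Hilbert space `ℓ²(ℕ × ℤ, ℂ)`. -/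
abbrev H : Type := lp (fun _ : ℕ × ℤ => ℂ) 2

/-- The canonical orthonormal basis vector `ξ_{n,k}` of `ℓ²(ℕ × ℤ, ℂ)`.
(The convention `ξ_{n,k} = 0` for `n < 0` is realized via truncated subtraction
on `ℕ` together with the vanishing coefficient `√(1 - q⁰) = 0`.) -/
def ξ (p : ℕ × ℤ) : H := lp.single 2 p 1

local notation "⟪" x ", " y "⟫" => @inner ℂ _ _ x y

lemma xi_apply (r p : ℕ × ℤ) : (ξ r : ∀ _ : ℕ × ℤ, ℂ) p = if p = r then 1 else 0 := by
  rw [ξ, lp.single_apply]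
  split_ifs with h <;> simp [h]

lemma xi_inner (f : H) (p : ℕ × ℤ) : ⟪ξ p, f⟫ = f p := by
  simp [ξ, lp.inner_single_left]

lemma single_eq_smul (r : ℕ × ℤ) (c : ℂ) : lp.single 2 r c = c • ξ r := by
  rw [ξ, ← lp.single_smul]; simp

lemma hasSum_coord (A : H →L[ℂ] H) (v : H) (p : ℕ × ℤ) :
    HasSum (fun r => v r * (A (ξ r) : ∀ _ : ℕ × ℤ, ℂ) p) ((A v : ∀ _ : ℕ × ℤ, ℂ) p) := by
  have h0 := lp.hasSum_single (E := fun _ : ℕ × ℤ => ℂ) (p := 2) (by norm_num) v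
  have h1 := h0.mapL ((innerSL ℂ (ξ p)).comp A)
  simp only [ContinuousLinearMap.coe_comp', Function.comp_apply, innerSL_apply_apply] at h1
  convert h1 using 2 with r
  · rfl
  · rw [single_eq_smul, map_smul, inner_smul_right]
    exact congrArg _ (xi_inner _ _).symm
  · exact (xi_inner _ _).symm

lemma ext_xi {A B : H →L[ℂ] H} (h : ∀ p, A (ξ p) = B (ξ p)) : A = B := by
  refine ContinuousLinearMap.ext fun v => ?_
  have h0 := lp.hasSum_single (E := fun _ : ℕ × ℤ => ℂ) (p := 2) (by norm_num) v
  have hA := h0.mapL A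
  have hB := h0.mapL B
  refine hA.unique ?_
  convert hB using 2 with r
  rw [single_eq_smul, map_smul, map_smul, h]

lemma hbv (q : ℝ) (b : H →L[ℂ] H)
    (hb : ∀ (n : ℕ) (k : ℤ), b (ξ (n, k)) = ((q ^ n : ℝ) : ℂ) • ξ (n, k + 1))
    (v : H) (p : ℕ) (l : ℤ) :
    (b v : ∀ _ : ℕ × ℤ, ℂ) (p, l) = (q : ℂ) ^ p * v (p, l - 1) := by
  have hs := hasSum_coord b v (p, l)
  have heq : (fun r : ℕ × ℤ => v r * (b (ξ r) : ∀ _ : ℕ × ℤ, ℂ) (p, l)) =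
      fun r : ℕ × ℤ => v r * ((q : ℂ) ^ r.1 *
        (if ((p, l) : ℕ × ℤ) = (r.1, r.2 + 1) then 1 else 0)) := by
    funext r
    obtain ⟨m, k⟩ := r
    rw [hb m k]
    simp [lp.coeFn_smul, xi_apply]
  rw [heq] at hs
  have h2 : HasSum (fun r : ℕ × ℤ => v r * ((q : ℂ) ^ r.1 *
      (if ((p, l) : ℕ × ℤ) = (r.1, r.2 + 1) then 1 else 0)))
      (v (p, l - 1) * ((q : ℂ) ^ p * (if ((p, l) : ℕ × ℤ) = (p, (l - 1) + 1) then 1 else 0))) := by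
    refine hasSum_single ((p, l - 1) : ℕ × ℤ) fun r hr => ?_
    obtain ⟨m, k⟩ := r
    rw [if_neg, mul_zero, mul_zero]
    intro hc
    obtain ⟨h1, h2⟩ := Prod.mk.injEq .. ▸ hc
    exact hr (by simp [Prod.ext_iff]; omega)
  have := hs.unique h2
  rw [this, if_pos (by simp)]
  ring

lemma hav (q : ℝ) (a : H →L[ℂ] H)
    (ha : ∀ (n : ℕ) (k : ℤ),
      a (ξ (n, k)) = (Real.sqrt (1 - q ^ (2 * n)) : ℂ) • ξ (n - 1, k))
    (v : H) (p : ℕ) (l : ℤ) :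
    (a v : ∀ _ : ℕ × ℤ, ℂ) (p, l) =
      (Real.sqrt (1 - q ^ (2 * (p + 1))) : ℂ) * v (p + 1, l) := by
  have hs := hasSum_coord a v (p, l)
  have heq : (fun r : ℕ × ℤ => v r * (a (ξ r) : ∀ _ : ℕ × ℤ, ℂ) (p, l)) =
      fun r : ℕ × ℤ => v r * ((Real.sqrt (1 - q ^ (2 * r.1)) : ℂ) *
        (if ((p, l) : ℕ × ℤ) = (r.1 - 1, r.2) then 1 else 0)) := by
    funext r
    obtain ⟨m, k⟩ := r
    rw [ha m k]
    show v (m, k) * ((Real.sqrt (1 - q ^ (2 * m)) : ℂ) * (ξ (m - 1, k) : ∀ _ : ℕ × ℤ, ℂ) (p, l)) = _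
    simp [lp.coeFn_smul, xi_apply]
  rw [heq] at hs
  have h2 : HasSum (fun r : ℕ × ℤ => v r * ((Real.sqrt (1 - q ^ (2 * r.1)) : ℂ) *
      (if ((p, l) : ℕ × ℤ) = (r.1 - 1, r.2) then 1 else 0)))
      (v (p + 1, l) * ((Real.sqrt (1 - q ^ (2 * (p + 1))) : ℂ) *
      (if ((p, l) : ℕ × ℤ) = ((p + 1) - 1, l) then 1 else 0))) := by
    refine hasSum_single ((p + 1, l) : ℕ × ℤ) fun r hr => ?_
    obtain ⟨m, k⟩ := r
    by_cases hc : ((p, l) : ℕ × ℤ) = (m - 1, k)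
    · obtain ⟨h1, h2⟩ := Prod.mk.injEq .. ▸ hc
      have hm : m = 0 ∧ p = 0 := by
        constructor <;> by_contra hm0
        · exact hr (by simp [Prod.ext_iff]; omega)
        · exact hr (by simp [Prod.ext_iff]; omega)
      rw [hm.1]
      norm_num
    · rw [if_neg hc, mul_zero, mul_zero]
  have := hs.unique h2
  rw [this, if_pos (by simp)]
  ring

lemma hTv (i j : ℕ) (n : ℤ) (T : H →L[ℂ] H)
    (hT : ∀ (m : ℕ) (k : ℤ), T (ξ (m, k)) = if j = m then ξ (i, k + n) else 0)
    (v : H) (p : ℕ) (l : ℤ) :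
    (T v : ∀ _ : ℕ × ℤ, ℂ) (p, l) = if p = i then v (j, l - n) else 0 := by
  have hs := hasSum_coord T v (p, l)
  have heq : (fun r : ℕ × ℤ => v r * (T (ξ r) : ∀ _ : ℕ × ℤ, ℂ) (p, l)) =
      fun r : ℕ × ℤ => v r * (if j = r.1 then
        (if ((p, l) : ℕ × ℤ) = (i, r.2 + n) then 1 else 0) else 0) := by
    funext r
    obtain ⟨m, k⟩ := r
    rw [hT m k]
    by_cases hj : j = m
    · simp [hj, xi_apply]
    · simp [hj, lp.coeFn_zero]
  rw [heq] at hs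
  have h2 : HasSum (fun r : ℕ × ℤ => v r * (if j = r.1 then
      (if ((p, l) : ℕ × ℤ) = (i, r.2 + n) then 1 else 0) else 0))
      (v (j, l - n) * (if j = j then
      (if ((p, l) : ℕ × ℤ) = (i, (l - n) + n) then 1 else 0) else 0)) := by
    refine hasSum_single ((j, l - n) : ℕ × ℤ) fun r hr => ?_
    obtain ⟨m, k⟩ := r
    by_cases hj : j = m
    · rw [if_pos hj, if_neg, mul_zero]
      intro hc
      obtain ⟨h1, h2⟩ := Prod.mk.injEq .. ▸ hc
      exact hr (by simp [Prod.ext_iff]; omega)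
    · rw [if_neg hj, mul_zero]
  have := hs.unique h2
  rw [this]
  by_cases hp : p = i
  · rw [if_pos hp, if_pos rfl, if_pos (by simp [hp]), mul_one]
  · rw [if_neg hp, if_pos rfl, if_neg (by simp [Prod.ext_iff]; tauto), mul_zero]

lemma hb'v (q : ℝ) (b : H →L[ℂ] H)
    (hb : ∀ (n : ℕ) (k : ℤ), b (ξ (n, k)) = ((q ^ n : ℝ) : ℂ) • ξ (n, k + 1))
    (v : H) (p : ℕ) (l : ℤ) :
    ((ContinuousLinearMap.adjoint b) v : ∀ _ : ℕ × ℤ, ℂ) (p, l) = (q : ℂ) ^ p * v (p, l + 1) := by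
  rw [← xi_inner, ContinuousLinearMap.adjoint_inner_right, hb, inner_smul_left, xi_inner]
  simp [Complex.ofReal_pow]

lemma hb'xi (q : ℝ) (b : H →L[ℂ] H)
    (hb : ∀ (n : ℕ) (k : ℤ), b (ξ (n, k)) = ((q ^ n : ℝ) : ℂ) • ξ (n, k + 1))
    (m : ℕ) (k : ℤ) :
    (ContinuousLinearMap.adjoint b) (ξ (m, k)) = ((q ^ m : ℝ) : ℂ) • ξ (m, k - 1) := by
  apply lp.ext
  funext r
  obtain ⟨p, l⟩ := r
  rw [show ((ContinuousLinearMap.adjoint b) (ξ (m, k)) : ∀ _ : ℕ × ℤ, ℂ) (p, l) =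
    (q : ℂ) ^ p * (ξ (m, k) : ∀ _ : ℕ × ℤ, ℂ) (p, l + 1) from hb'v q b hb _ p l]
  simp only [lp.coeFn_smul, Pi.smul_apply, smul_eq_mul, xi_apply, Complex.ofReal_pow]
  have hiff : (((p, l + 1) : ℕ × ℤ) = (m, k)) ↔ (((p, l) : ℕ × ℤ) = (m, k - 1)) := by
    simp only [Prod.mk.injEq]
    omega
  rw [if_congr hiff rfl rfl]
  split_ifs with h
  · obtain ⟨h1, h2⟩ := Prod.mk.injEq .. ▸ h
    rw [h1]
  · simp

open ContinuousLinearMap in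
/-- Every `e_{ij} ⊗ S^n` (determined by `(e_{ij} ⊗ S^n) ξ_{m,k} = δ_{j,m} ξ_{i,k+n}`)
lies in the double centralizer (bicommutant) of `{a, a*, b, b*}`. -/
theorem stmt_7 (q : ℝ) (hq0 : 0 < q) (hq1 : q < 1)
    (a b : H →L[ℂ] H)
    (ha : ∀ (n : ℕ) (k : ℤ),
      a (ξ (n, k)) = (Real.sqrt (1 - q ^ (2 * n)) : ℂ) • ξ (n - 1, k))
    (hb : ∀ (n : ℕ) (k : ℤ), b (ξ (n, k)) = ((q ^ n : ℝ) : ℂ) • ξ (n, k + 1))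
    (i j : ℕ) (n : ℤ) (T : H →L[ℂ] H)
    (hT : ∀ (m : ℕ) (k : ℤ), T (ξ (m, k)) = if j = m then ξ (i, k + n) else 0) :
    T ∈ Set.centralizer (Set.centralizer {a, adjoint a, b, adjoint b}) := by
  refine Set.mem_centralizer_iff.mpr fun S hS => ?_
  have hSmem := Set.mem_centralizer_iff.mp hS
  have hSa : a * S = S * a := hSmem a (by simp)
  have hSb : b * S = S * b := hSmem b (by simp)
  have hSb' : adjoint b * S = S * adjoint b := hSmem (adjoint b) (by simp)
  have comm : ∀ (x : H →L[ℂ] H), x * S = S * x → ∀ w : H, x (S w) = S (x w) := by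
    intro x h w
    have := congrArg (fun A : H →L[ℂ] H => A w) h
    simpa [ContinuousLinearMap.mul_apply] using this
  -- basic nonvanishing facts
  have hqc : (q : ℂ) ≠ 0 := by
    simp [ne_of_gt hq0]
  have hq2 : ∀ m : ℕ, q ^ (2 * (m + 1)) < 1 := fun m =>
    pow_lt_one₀ (le_of_lt hq0) hq1 (by omega)
  have hsqrt_ne : ∀ m : ℕ, ((Real.sqrt (1 - q ^ (2 * (m + 1))) : ℝ) : ℂ) ≠ 0 := by
    intro m
    rw [Complex.ofReal_ne_zero]
    have : 0 < 1 - q ^ (2 * (m + 1)) := by linarith [hq2 m]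
    positivity
  -- the three commutation equations on matrix entries
  have eqB : ∀ (p m : ℕ) (l k : ℤ),
      (q : ℂ) ^ m * (S (ξ (m, k + 1)) : ∀ _ : ℕ × ℤ, ℂ) (p, l) =
      (q : ℂ) ^ p * (S (ξ (m, k)) : ∀ _ : ℕ × ℤ, ℂ) (p, l - 1) := by
    intro p m l k
    have h1 := comm b hSb (ξ (m, k))
    have h2 := congrArg (fun w : H => (w : ∀ _ : ℕ × ℤ, ℂ) (p, l)) h1
    simp only [hbv q b hb, hb m k, map_smul, lp.coeFn_smul, Pi.smul_apply, smul_eq_mul,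
      Complex.ofReal_pow] at h2
    exact h2.symm
  have eqB' : ∀ (p m : ℕ) (l k : ℤ),
      (q : ℂ) ^ m * (S (ξ (m, k - 1)) : ∀ _ : ℕ × ℤ, ℂ) (p, l) =
      (q : ℂ) ^ p * (S (ξ (m, k)) : ∀ _ : ℕ × ℤ, ℂ) (p, l + 1) := by
    intro p m l k
    have h1 := comm (adjoint b) hSb' (ξ (m, k))
    have h2 := congrArg (fun w : H => (w : ∀ _ : ℕ × ℤ, ℂ) (p, l)) h1
    simp only [hb'v q b hb, hb'xi q b hb, map_smul, lp.coeFn_smul, Pi.smul_apply, smul_eq_mul,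
      Complex.ofReal_pow] at h2
    exact h2.symm
  have eqA : ∀ (p m : ℕ) (l k : ℤ),
      ((Real.sqrt (1 - q ^ (2 * m)) : ℝ) : ℂ) * (S (ξ (m - 1, k)) : ∀ _ : ℕ × ℤ, ℂ) (p, l) =
      ((Real.sqrt (1 - q ^ (2 * (p + 1))) : ℝ) : ℂ) *
        (S (ξ (m, k)) : ∀ _ : ℕ × ℤ, ℂ) (p + 1, l) := by
    intro p m l k
    have h1 := comm a hSa (ξ (m, k))
    have h2 := congrArg (fun w : H => (w : ∀ _ : ℕ × ℤ, ℂ) (p, l)) h1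
    simp only [hav q a ha, ha m k, map_smul, lp.coeFn_smul, Pi.smul_apply, smul_eq_mul] at h2
    exact h2.symm
  -- off-diagonal entries vanish
  have diag : ∀ (p m : ℕ) (l k : ℤ), p ≠ m → (S (ξ (m, k)) : ∀ _ : ℕ × ℤ, ℂ) (p, l) = 0 := by
    intro p m l k hpm
    have e1 := eqB p m l (k - 1)
    rw [show k - 1 + 1 = k by ring] at e1
    have e2 := eqB' p m (l - 1) k
    rw [show l - 1 + 1 = l by ring] at e2
    have key : ((q : ℂ) ^ m * (q : ℂ) ^ m - (q : ℂ) ^ p * (q : ℂ) ^ p) *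
        (S (ξ (m, k)) : ∀ _ : ℕ × ℤ, ℂ) (p, l) = 0 := by
      linear_combination (q : ℂ) ^ m * e1 + (q : ℂ) ^ p * e2
    have hne : ((q : ℂ) ^ m * (q : ℂ) ^ m - (q : ℂ) ^ p * (q : ℂ) ^ p) ≠ 0 := by
      have hr : (q : ℝ) ^ m * q ^ m ≠ q ^ p * q ^ p := by
        rcases Nat.lt_trichotomy p m with h | h | h
        · have := pow_lt_pow_right_of_lt_one₀ hq0 hq1 h
          nlinarith [pow_pos hq0 p, pow_pos hq0 m]
        · exact absurd h hpm
        · have := pow_lt_pow_right_of_lt_one₀ hq0 hq1 h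
          nlinarith [pow_pos hq0 p, pow_pos hq0 m]
      intro hc
      apply hr
      have h0 : ((q ^ m * q ^ m - q ^ p * q ^ p : ℝ) : ℂ) = 0 := by
        push_cast
        linear_combination hc
      have h1 := Complex.ofReal_eq_zero.mp h0
      linarith
    exact (mul_eq_zero.mp key).resolve_left hne
  -- shift invariance along the diagonal
  have shift1 : ∀ (p : ℕ) (l k : ℤ),
      (S (ξ (p, k + 1)) : ∀ _ : ℕ × ℤ, ℂ) (p, l + 1) = (S (ξ (p, k)) : ∀ _ : ℕ × ℤ, ℂ) (p, l) := by
    intro p l k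
    have := eqB p p (l + 1) k
    rw [show l + 1 - 1 = l by ring] at this
    exact mul_left_cancel₀ (pow_ne_zero p hqc) this
  -- level independence
  have level : ∀ (p : ℕ) (l k : ℤ),
      (S (ξ (p, k)) : ∀ _ : ℕ × ℤ, ℂ) (p, l) = (S (ξ (0, k)) : ∀ _ : ℕ × ℤ, ℂ) (0, l) := by
    intro p
    induction p with
    | zero => intro l k; rfl
    | succ p ih =>
      intro l k
      have h1 := eqA p (p + 1) l k
      rw [show p + 1 - 1 = p from rfl] at h1
      have h2 := mul_left_cancel₀ (hsqrt_ne p) h1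
      rw [← h2, ih]
  have shiftZ : ∀ (t l k : ℤ),
      (S (ξ (0, k + t)) : ∀ _ : ℕ × ℤ, ℂ) (0, l + t) = (S (ξ (0, k)) : ∀ _ : ℕ × ℤ, ℂ) (0, l) := by
    intro t
    induction t using Int.induction_on with
    | zero => simp
    | succ i ih =>
      intro l k
      rw [show l + ((i : ℤ) + 1) = (l + i) + 1 by ring, show k + ((i : ℤ) + 1) = (k + i) + 1 by ring,
        shift1 0 (l + i) (k + i), ih]
    | pred i ih =>
      intro l k
      rw [show l + (-(i : ℤ) - 1) = (l - 1) + (-(i : ℤ)) by ring,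
        show k + (-(i : ℤ) - 1) = (k - 1) + (-(i : ℤ)) by ring, ih (l - 1) (k - 1)]
      have h2 := shift1 0 (l - 1) (k - 1)
      rw [show k - 1 + 1 = k by ring, show l - 1 + 1 = l by ring] at h2
      exact h2.symm
  -- master formula for entries of S
  have main : ∀ (p m : ℕ) (l k : ℤ),
      (S (ξ (m, k)) : ∀ _ : ℕ × ℤ, ℂ) (p, l) =
      if p = m then (S (ξ (0, 0)) : ∀ _ : ℕ × ℤ, ℂ) (0, l - k) else 0 := by
    intro p m l k
    by_cases h : p = m
    · subst h
      rw [if_pos rfl, level p l k]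
      have h3 := shiftZ k (l - k) 0
      rw [zero_add, sub_add_cancel] at h3
      exact h3
    · rw [if_neg h]
      exact diag p m l k h
  -- conclude
  refine ext_xi fun P => ?_
  obtain ⟨m, k⟩ := P
  rw [ContinuousLinearMap.mul_apply, ContinuousLinearMap.mul_apply, hT m k]
  by_cases hj : j = m
  · rw [if_pos hj]
    apply lp.ext
    funext r
    obtain ⟨p, l⟩ := r
    rw [show (T (S (ξ (m, k))) : ∀ _ : ℕ × ℤ, ℂ) (p, l) =
      if p = i then (S (ξ (m, k)) : ∀ _ : ℕ × ℤ, ℂ) (j, l - n) else 0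
      from hTv i j n T hT _ p l]
    rw [main p i l (k + n), main j m (l - n) k, if_pos hj,
      show l - (k + n) = l - n - k by ring]
  · rw [if_neg hj, map_zero]
    apply lp.ext
    funext r
    obtain ⟨p, l⟩ := r
    rw [show (T (S (ξ (m, k))) : ∀ _ : ℕ × ℤ, ℂ) (p, l) =
      if p = i then (S (ξ (m, k)) : ∀ _ : ℕ × ℤ, ℂ) (j, l - n) else 0
      from hTv i j n T hT _ p l]
    rw [main j m (l - n) k, if_neg hj]
    simp
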